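/- With H a graph of size λ and notation as in the main construction, suppose every G_α (α < λ⁺) embeds into H. Define U to be the set of finite sequences s = ⟨v_0, …, v_n⟩ of vertices of H such that for every ξ < λ⁺ there exists an (s, ξ)-embedding. Then for every s ∈ U there exists a vertex v of H with s⌢v ∈ U. -/

import Mathlib

open Cardinal Ordinal

/-- The poset `T α`: strictly decreasing finite lists of ordinals `< α`, ordered by
reverse strict-prefix; the empty list is the top element, and the lists starting with `β`
form the copy of `T β`. -/
def TT (α : Ordinal) : Type 1 :=
  {l : List Ordinal // l.Pairwise (· > ·) ∧ ∀ x ∈ l, x < α}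

instance instPOTT (α : Ordinal) : PartialOrder (TT α) where
  le u v := v.1 <+: u.1
  le_refl u := List.prefix_refl _
  le_trans _ _ _ h1 h2 := List.IsPrefix.trans h2 h1
  le_antisymm _ _ h1 h2 :=
    Subtype.ext (List.IsPrefix.eq_of_length h2 ((List.IsPrefix.length_le h2).antisymm (List.IsPrefix.length_le h1)))

/-- The top element of `T α`. -/
def topT (α : Ordinal) : TT α := ⟨[], by simp, by simp⟩

/-- The rank function of the reversed order `⟨T α, >⟩`. -/
def dT {α : Ordinal} (v : TT α) : ℕ := v.1.length

/-- The rank function of `⟨T α, <⟩`; the top element has rank `α`. -/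
def rT {α : Ordinal} (v : TT α) : Ordinal := v.1.getLastD α

/-- The graph `G_α` on `T α`: `u ~ v` iff `u, v` are comparable and `d u ~_G d v`. -/
def Gg (G : SimpleGraph ℕ) (α : Ordinal) : SimpleGraph (TT α) where
  Adj u v := u ≠ v ∧ (u ≤ v ∨ v ≤ u) ∧ G.Adj (dT u) (dT v)
  symm := ⟨fun _ _ h => ⟨Ne.symm h.1, h.2.1.symm, h.2.2.symm⟩⟩
  loopless := ⟨fun _ h => h.1 rfl⟩

/-- The one-way infinite path `P_ω` on `ℕ`. -/
def rayG : SimpleGraph ℕ := SimpleGraph.fromRel (fun m n => n = m + 1)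

/-- `A` is a (not necessarily induced) subgraph of `B`. -/
def SubCopy {X Y : Type*} (A : SimpleGraph X) (B : SimpleGraph Y) : Prop :=
  ∃ f : X ↪ Y, ∀ u v, A.Adj u v → B.Adj (f u) (f v)

/-- `R` is (isomorphic to) the countable random graph: the extension property. -/
def IsRado (R : SimpleGraph ℕ) : Prop :=
  ∀ A B : Finset ℕ, Disjoint A B →
    ∃ v, v ∉ A ∧ v ∉ B ∧ (∀ a ∈ A, R.Adj v a) ∧ (∀ b ∈ B, ¬R.Adj v b)

/-- An `(s, ξ)`-embedding: an induced embedding of some `G_α`, `ξ ≤ α < λ⁺`, into `H`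
whose image contains `s` as the top part of a chain with `d`-values `0, …, n` and whose
last vertex has rank `> ξ`. -/
def IsSXEmb {V : Type} (G : SimpleGraph ℕ) (lam : Cardinal) (H : SimpleGraph V)
    (s : List V) (ξ : Ordinal) : Prop :=
  ∃ α : Ordinal, ξ ≤ α ∧ α < (Order.succ lam).ord ∧
    ∃ (f : Gg G α ↪g H) (t : List (TT α)),
      s = t.map ⇑f ∧
      (∀ i : Fin t.length, dT (t.get i) = i.1) ∧
      (∀ u ∈ t, ∀ v ∈ t, u ≤ v ∨ v ≤ u) ∧
      (∀ v ∈ t.getLast?, ξ < rT v)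

/-- The set `U` of finite sequences admitting `(s, ξ)`-embeddings for all `ξ < λ⁺`. -/
def UU {V : Type} (G : SimpleGraph ℕ) (lam : Cardinal) (H : SimpleGraph V) :
    Set (List V) :=
  {s | ∀ ξ < (Order.succ lam).ord, IsSXEmb G lam H s ξ}


-- helper: in a `Sorted (· > ·)` list the last element is minimal
lemma sorted_gt_getLast_le {l : List Ordinal} (hs : l.Pairwise (· > ·)) (h : l ≠ [])
    (x : Ordinal) (hx : x ∈ l) : l.getLast h ≤ x := by
  obtain ⟨a, ha⟩ := List.get_of_mem hx
  rw [List.getLast_eq_getElem]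
  subst ha
  rcases lt_or_eq_of_le (Nat.le_sub_one_of_lt a.2) with hlt | heq
  · exact le_of_lt (hs.rel_get_of_lt (Fin.lt_iff_val_lt_val.2 hlt))
  · exact le_of_eq (congrArg l.get (Fin.ext heq.symm))

/-- if every `G_α` (`α < λ⁺`) embeds into `H`, then every `s ∈ U` has a
one-point extension `s⌢v ∈ U`. -/
theorem stmt9 {V : Type} (lam : Cardinal) (hlam : Cardinal.aleph0 ≤ lam)
    (G : SimpleGraph ℕ) (H : SimpleGraph V) (hV : Cardinal.mk V = lam)
    (hemb : ∀ α : Ordinal, α < (Order.succ lam).ord → Nonempty (Gg G α ↪g H)) :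
    ∀ s ∈ UU G lam H, ∃ v : V, s ++ [v] ∈ UU G lam H := by
  intro s hs
  have hVne : Nonempty V := mk_ne_zero_iff.1 (by rw [hV]; exact (aleph0_pos.trans_le hlam).ne')
  set Λ := (Order.succ lam).ord with hΛ
  have hΛlim : Order.IsSuccLimit Λ := Cardinal.isSuccLimit_ord (hlam.trans (Order.le_succ lam))
  have hsucc : ∀ ξ : Ordinal, ξ < ξ + 1 := fun ξ => by
    rw [Ordinal.add_one_eq_succ]; exact Order.lt_succ ξ
  have mono : ∀ {s' : List V} {ξ ξ' : Ordinal}, ξ ≤ ξ' →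
      IsSXEmb G lam H s' ξ' → IsSXEmb G lam H s' ξ := by
    rintro s' ξ ξ' hle ⟨α, h1, h2, f, t, ht1, ht2, ht3, ht4⟩
    exact ⟨α, hle.trans h1, h2, f, t, ht1, ht2, ht3,
      fun v hv => lt_of_le_of_lt hle (ht4 v hv)⟩
  have key : ∀ ξ < Λ, ∃ v : V, IsSXEmb G lam H (s ++ [v]) ξ := by
    intro ξ hξ
    have hξ1 : ξ + 1 < Λ := by
      rw [Ordinal.add_one_eq_succ]; exact hΛlim.succ_lt hξ
    have hξ2 : ξ + 1 + 1 < Λ := by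
      rw [Ordinal.add_one_eq_succ]; exact hΛlim.succ_lt hξ1
    obtain ⟨α, hξα, hα, f, t, hmap, hd, hch, hlast⟩ := hs (ξ + 1 + 1) hξ2
    have hlt2 : ξ < ξ + 1 + 1 := (hsucc ξ).trans (hsucc (ξ + 1))
    rcases eq_or_ne t [] with rfl | htne
    · -- s = [], take the top element
      have hse : s = [] := by simpa using hmap
      refine ⟨f (topT α), α, (le_of_lt hlt2).trans hξα, hα, f, [topT α], ?_, ?_, ?_, ?_⟩
      · simp [hse]
      · intro i
        fin_cases i <;> rfl
      · intro u hu v hv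
        simp at hu hv
        subst hu; subst hv; exact Or.inl le_rfl
      · intro v hv
        simp at hv
        subst hv
        exact lt_of_lt_of_le hlt2 hξα
    · -- t nonempty: extend the chain by one element
      set n := t.length with hn
      have hnpos : 0 < n := List.length_pos_iff.2 htne
      set vlast := t.getLast htne with hvl
      set l := vlast.1 with hl
      have hlen : l.length = n - 1 := by
        have h1 := hd ⟨n - 1, Nat.sub_lt hnpos one_pos⟩
        rw [show t.get ⟨n - 1, Nat.sub_lt hnpos one_pos⟩ = vlast from
          (List.getLast_eq_getElem htne).symm] at h1
        exact h1
      have hrl : ξ + 1 + 1 < l.getLastD α :=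
        hlast vlast (List.getLast?_eq_getLast htne)
      set β := ξ + 1 with hβ
      have hβα : β < α := lt_of_lt_of_le (hsucc (ξ + 1)) hξα
      have hβl : ∀ x ∈ l, β < x := by
        intro x hx
        have hne : l ≠ [] := List.ne_nil_of_mem hx
        have h1 : l.getLast hne ≤ x := sorted_gt_getLast_le vlast.2.1 hne x hx
        have h2 : l.getLastD α = l.getLast hne := by
          rw [List.getLastD_eq_getLast?, List.getLast?_eq_getLast hne]
          rfl
        refine lt_of_lt_of_le (lt_trans ?_ (h2 ▸ hrl)) h1
        exact hsucc (ξ + 1)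
      have wsorted : (l ++ [β]).Pairwise (· > ·) := by
        rw [List.pairwise_append]
        refine ⟨vlast.2.1, List.pairwise_singleton _ β, fun x hx y hy => ?_⟩
        simp only [List.mem_singleton] at hy
        subst hy
        exact hβl x hx
      have wbound : ∀ x ∈ l ++ [β], x < α := by
        intro x hx
        rcases List.mem_append.1 hx with h | h
        · exact vlast.2.2 x h
        · simp only [List.mem_singleton] at h; subst h; exact hβα
      set w : TT α := ⟨l ++ [β], wsorted, wbound⟩ with hw
      have hdw : dT w = n := by
        show (l ++ [β]).length = n
        rw [List.length_append, hlen]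
        simp
        omega
      have hwle : ∀ u ∈ t, w ≤ u := by
        intro u hu
        show u.1 <+: l ++ [β]
        have hdu : u.1.length ≤ n - 1 := by
          obtain ⟨i, hi⟩ := List.get_of_mem hu
          have := hd i
          rw [hi] at this
          show dT u ≤ n - 1
          rw [this]
          omega
        rcases hch u hu vlast (List.getLast_mem htne) with h | h
        · have h' : l <+: u.1 := h
          have hel : u.1 = l := (List.IsPrefix.eq_of_length h'
            (le_antisymm (List.IsPrefix.length_le h') (hlen ▸ hdu))).symm
          rw [hel]
          exact List.prefix_append l [β]
        · exact List.IsPrefix.trans (h : u.1 <+: l) (List.prefix_append l [β])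
      refine ⟨f w, α, (le_of_lt hlt2).trans hξα, hα, f, t ++ [w], ?_, ?_, ?_, ?_⟩
      · rw [List.map_append, ← hmap]
        rfl
      · intro i
        rcases lt_or_ge i.1 n with h | h
        · have hg : (t ++ [w]).get i = t.get ⟨i.1, h⟩ := by
            simp only [List.get_eq_getElem]
            exact List.getElem_append_left h
          rw [hg, hd ⟨i.1, h⟩]
        · have hi : i.1 = n := by
            have h2 := i.2
            simp only [List.length_append, List.length_singleton] at h2
            omega
          have hg : (t ++ [w]).get i = w := by
            simp only [List.get_eq_getElem]
            exact List.getElem_concat_length hi _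
          rw [hg, hdw, hi]
      · intro u hu v hv
        rcases List.mem_append.1 hu with h1 | h1 <;> rcases List.mem_append.1 hv with h2 | h2
        · exact hch u h1 v h2
        · simp only [List.mem_singleton] at h2
          subst h2
          exact Or.inr (hwle u h1)
        · simp only [List.mem_singleton] at h1
          subst h1
          exact Or.inl (hwle v h2)
        · simp only [List.mem_singleton] at h1 h2
          subst h1; subst h2
          exact Or.inl le_rfl
      · intro v hv
        rw [List.getLast?_concat] at hv
        simp only [Option.mem_def, Option.some.injEq] at hv
        subst hv
        show ξ < rT w
        show ξ < (l ++ [β]).getLastD α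
        rw [List.getLastD_concat]
        exact hsucc ξ
  -- pigeonhole
  choose! g hg using key
  by_contra hcon
  push_neg at hcon
  have hbad : ∀ v : V, ∃ βv, βv < Λ ∧ ¬ IsSXEmb G lam H (s ++ [v]) βv := by
    intro v
    have h1 := hcon v
    simp only [UU, Set.mem_setOf_eq, not_forall] at h1
    obtain ⟨βv, hβv, hnot⟩ := h1
    exact ⟨βv, hβv, hnot⟩
  choose β hβlt hβ using hbad
  have hsup : (⨆ v, β v) < Λ := by
    refine Ordinal.iSup_lt_ord ?_ hβlt
    rw [hΛ, (isRegular_succ hlam).cof_eq, hV]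
    exact Order.lt_succ lam
  have h1 := hg _ hsup
  exact hβ (g (⨆ v, β v)) (mono (Ordinal.le_iSup β (g (⨆ v, β v))) h1)
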